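/- Fix η > 0 and suppose 0 < c_1 ≤ ... ≤ c_n. If the quasi-linear program at fixed η is feasible, then any optimal solution w has the following structure: there exist constants K ≥ 0, W ≥ 0, and an integer t ∈ {0,...,n} such that wᵢ = W for all i ≤ t and wᵢ = K/cᵢ for all i ≥ t+1. -/

import Mathlib

noncomputable section

/-- Feasibility for the quasi-linear program at fixed noise parameter `η`. -/
def Feas {n : ℕ} (c : Fin n → ℝ) (σ2 o η : ℝ) (f : ℝ → ℝ) (w : Fin n → ℝ) : Prop :=
  (∀ i, c i * w i * η ≤ f (σ2 * ∑ j, (w j) ^ 2 + 2 / η ^ 2) - o) ∧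
    (∑ i, w i = 1) ∧ (∀ i, 0 ≤ w i)

private lemma sum_two_diff {n : ℕ} {i j : Fin n} (hij : i ≠ j) (g h : Fin n → ℝ)
    (hk : ∀ k, k ≠ i → k ≠ j → g k = h k) :
    ∑ k, g k = ∑ k, h k + (g i - h i) + (g j - h j) := by
  have h1 : ∑ k, (g k - h k) = ∑ k ∈ ({i, j} : Finset (Fin n)), (g k - h k) := by
    refine (Finset.sum_subset (Finset.subset_univ _) ?_).symm
    intro x _ hx
    simp only [Finset.mem_insert, Finset.mem_singleton, not_or] at hx
    rw [hk x hx.1 hx.2]; ring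
  have h2 : ∑ k ∈ ({i, j} : Finset (Fin n)), (g k - h k) = (g i - h i) + (g j - h j) :=
    Finset.sum_pair hij
  have h3 : ∑ k, (g k - h k) = ∑ k, g k - ∑ k, h k := Finset.sum_sub_distrib g h
  linarith [h1.trans h2, h3]

/-- Structure of the optimal solution of the quasi-linear program at fixed
η > 0 with 0 < c₁ ≤ ... ≤ cₙ: there exist K ≥ 0, W ≥ 0 and t ∈ {0,...,n} such
that wᵢ = W for the first t agents and wᵢ = K/cᵢ for the remaining agents. -/
theorem optimal_structure {n : ℕ} (c : Fin n → ℝ) (σ2 o η : ℝ) (f : ℝ → ℝ)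
    (hη : 0 < η) (hσ2 : 0 < σ2) (hc : ∀ i, 0 < c i) (hcm : Monotone c)
    (hf_anti : StrictAnti f) (hf_conc : ConcaveOn ℝ Set.univ f)
    (hf_diff : Differentiable ℝ f)
    (hfeasible : ∃ v, Feas c σ2 o η f v)
    (w : Fin n → ℝ) (hfeas : Feas c σ2 o η f w)
    (hopt : ∀ v, Feas c σ2 o η f v →
      σ2 * ∑ i, (w i) ^ 2 + 2 / η ^ 2 ≤ σ2 * ∑ i, (v i) ^ 2 + 2 / η ^ 2) :
    ∃ (K W : ℝ) (t : ℕ), 0 ≤ K ∧ 0 ≤ W ∧ t ≤ n ∧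
      (∀ i : Fin n, (i : ℕ) < t → w i = W) ∧
      (∀ i : Fin n, t ≤ (i : ℕ) → w i = K / c i) := by
  obtain ⟨hcon, hsum, hpos⟩ := hfeas
  rcases Nat.eq_zero_or_pos n with hn | hn
  · subst hn
    exact ⟨0, 0, 0, le_refl 0, le_refl 0, le_refl 0,
      fun i _ => i.elim0, fun i _ => i.elim0⟩
  have hne : Nonempty (Fin n) := ⟨⟨0, hn⟩⟩
  set S : ℝ := σ2 * ∑ j, (w j) ^ 2 + 2 / η ^ 2 with hS
  set B : ℝ := f S - o with hB
  -- B is nonnegative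
  have hB0 : 0 ≤ B := by
    have i0 : Fin n := ⟨0, hn⟩
    have := hcon i0
    have h0 : 0 ≤ c i0 * w i0 * η :=
      mul_nonneg (mul_nonneg (hc i0).le (hpos i0)) hη.le
    linarith
  -- key exchange lemma: if w i < w j then constraint i is tight
  have tight : ∀ i j : Fin n, w i < w j → c i * w i * η = B := by
    intro i j hwlt
    by_contra hne'
    have hslack : c i * w i * η < B := lt_of_le_of_ne (hcon i) hne'
    have hij : i ≠ j := by
      rintro rfl; exact lt_irrefl _ hwlt
    have hciη : 0 < c i * η := mul_pos (hc i) hη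
    set ε : ℝ := min (w j - w i) ((B - c i * w i * η) / (c i * η)) / 2 with hε
    have hm1 : 0 < w j - w i := by linarith
    have hm2 : 0 < (B - c i * w i * η) / (c i * η) := div_pos (by linarith) hciη
    have hε0 : 0 < ε := by positivity
    have hε1 : ε < w j - w i := by
      have := min_le_left (w j - w i) ((B - c i * w i * η) / (c i * η))
      rw [hε]; linarith
    have hε2 : ε ≤ (B - c i * w i * η) / (c i * η) := by
      have := min_le_right (w j - w i) ((B - c i * w i * η) / (c i * η))
      rw [hε]; linarith
    have hε2' : c i * ε * η ≤ B - c i * w i * η := by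
      have h' : ε * (c i * η) ≤ B - c i * w i * η := by
        calc ε * (c i * η) ≤ ((B - c i * w i * η) / (c i * η)) * (c i * η) := by
              exact mul_le_mul_of_nonneg_right hε2 hciη.le
          _ = B - c i * w i * η := div_mul_cancel₀ _ (ne_of_gt hciη)
      nlinarith
    set v : Fin n → ℝ := fun k => if k = i then w i + ε else if k = j then w j - ε else w k
      with hv
    have hvi : v i = w i + ε := by simp [hv]
    have hvj : v j = w j - ε := by simp [hv, hij.symm]
    have hvk : ∀ k, k ≠ i → k ≠ j → v k = w k := by
      intro k h1 h2; simp [hv, h1, h2]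
    -- sum of v is 1
    have hsumv : ∑ k, v k = 1 := by
      have := sum_two_diff hij v w hvk
      rw [hvi, hvj] at this
      rw [this, hsum]; ring
    -- sum of squares strictly decreases
    have hsqv : ∑ k, (v k) ^ 2 < ∑ k, (w k) ^ 2 := by
      have := sum_two_diff hij (fun k => (v k) ^ 2) (fun k => (w k) ^ 2)
        (fun k h1 h2 => by rw [hvk k h1 h2])
      simp only [hvi, hvj] at this
      rw [this]; nlinarith
    set Sv : ℝ := σ2 * ∑ j, (v j) ^ 2 + 2 / η ^ 2 with hSv
    have hSvS : Sv < S := by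
      rw [hSv, hS]
      have := mul_lt_mul_of_pos_left hsqv hσ2
      linarith
    have hfS : f S < f Sv := hf_anti hSvS
    -- v is feasible
    have hfeasv : Feas c σ2 o η f v := by
      refine ⟨?_, hsumv, ?_⟩
      · intro k
        have hgoal : c k * v k * η ≤ B := by
          by_cases hki : k = i
          · subst hki
            rw [hvi]
            nlinarith
          · by_cases hkj : k = j
            · subst hkj
              rw [hvj]
              have h1 : c k * (w k - ε) * η ≤ c k * w k * η := by
                nlinarith [mul_pos (mul_pos (hc k) hε0) hη]
              exact le_trans h1 (hcon k)
            · rw [hvk k hki hkj]; exact hcon k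
        have : B ≤ f Sv - o := by rw [hB] at hgoal ⊢; linarith
        exact le_trans hgoal this
      · intro k
        by_cases hki : k = i
        · subst hki; rw [hvi]; linarith [hpos k]
        · by_cases hkj : k = j
          · subst hkj; rw [hvj]; linarith [hpos i]
          · rw [hvk k hki hkj]; exact hpos k
    have := hopt v hfeasv
    rw [← hSv] at this
    linarith
  -- W is the maximum weight
  obtain ⟨jm, hjm⟩ := Finite.exists_max w
  set W : ℝ := w jm with hW
  have hW0 : 0 ≤ W := hpos jm
  set K : ℝ := B / η with hK
  have hK0 : 0 ≤ K := div_nonneg hB0 hη.le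
  -- if w i < W then w i = K / c i
  have hKci : ∀ i : Fin n, w i < W → w i = K / c i := by
    intro i hi
    have ht := tight i jm hi
    have hci : c i ≠ 0 := ne_of_gt (hc i)
    have hηne : η ≠ 0 := ne_of_gt hη
    rw [hK]
    field_simp
    linarith [ht]
  -- define the threshold t
  have hex : ∃ m : ℕ, m = n ∨ ∃ i : Fin n, (i : ℕ) = m ∧ w i ≠ W := ⟨n, Or.inl rfl⟩
  set t := Nat.find hex with htdef
  have htspec := Nat.find_spec hex
  have htmin : ∀ m, m < t → ¬(m = n ∨ ∃ i : Fin n, (i : ℕ) = m ∧ w i ≠ W) :=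
    fun m hm => Nat.find_min hex hm
  have htn : t ≤ n := Nat.find_le (Or.inl rfl)
  refine ⟨K, W, t, hK0, hW0, htn, ?_, ?_⟩
  · -- prefix: i < t → w i = W
    intro i hi
    have := htmin (i : ℕ) hi
    push_neg at this
    exact this.2 i rfl
  · -- suffix: t ≤ i → w i = K / c i
    intro i hi
    rcases htspec with htn' | ⟨i₀, hi₀, hwi₀⟩
    · exfalso
      have := i.isLt
      omega
    · have hwi₀lt : w i₀ < W := lt_of_le_of_ne (hjm i₀) hwi₀
      by_cases hii : i = i₀
      · subst hii; exact hKci i hwi₀lt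
      · -- i₀ ≤ i in Fin order, i ≠ i₀, so i₀ < i
        have hle : i₀ ≤ i := by
          have : (i₀ : ℕ) ≤ (i : ℕ) := by omega
          exact Fin.le_def.mpr this
        have hlt : i₀ < i := lt_of_le_of_ne hle (fun h => hii h.symm)
        -- claim w i < W
        have hwiW : w i < W := by
          rcases lt_or_eq_of_le (hjm i) with h | h
          · exact h
          · exfalso
            -- w i = W > w i₀, tight at i₀
            have hlt' : w i₀ < w i := by rw [h]; exact hwi₀lt
            have ht0 : c i₀ * w i₀ * η = B := tight i₀ i hlt'
            have hcle : c i₀ ≤ c i := hcm hlt.le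
            have hgt : c i₀ * w i₀ * η < c i * w i * η := by
              have h1 : c i₀ * w i₀ * η < c i₀ * w i * η :=
                mul_lt_mul_of_pos_right (mul_lt_mul_of_pos_left hlt' (hc i₀)) hη
              have h2 : c i₀ * w i * η ≤ c i * w i * η :=
                mul_le_mul_of_nonneg_right (mul_le_mul_of_nonneg_right hcle (hpos i)) hη.le
              linarith
            have := hcon i
            linarith
        exact hKci i hwiW
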